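/- Let C > 0, let E : [0,T] → (0,∞) be continuously differentiable with E(0) = E^{in} > 0, let D : [0,T] → [0,∞) be continuous, and suppose E'(t) + D(t) ≤ C (1 + E(t)²) E(t) for all t ∈ [0,T]. If T < (1/C) ln(√(1 + (E^{in})²)/E^{in}), then, setting A(T) = (E^{in}/√(1 + (E^{in})²)) e^{C T} (which satisfies A(T) < 1) and B(T) = A(T)/√(1 − A(T)²), one has for all t ∈ [0,T]: E(t) ≤ B(T) and E(t) + ∫₀^t D(τ) dτ ≤ E^{in} + C T B(T)(1 + B(T)²). -/

import Mathlib

open Set Real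

lemma H_hasDerivAt (y : ℝ) :
    HasDerivAt (fun y : ℝ => y / Real.sqrt (1 + y ^ 2))
      (1 / Real.sqrt (1 + y ^ 2) ^ 3) y := by
  have h1 : (0:ℝ) < 1 + y ^ 2 := by positivity
  have hs : 0 < Real.sqrt (1 + y ^ 2) := Real.sqrt_pos.mpr h1
  have hsq : Real.sqrt (1 + y ^ 2) ^ 2 = 1 + y ^ 2 := Real.sq_sqrt h1.le
  have hinner : HasDerivAt (fun y : ℝ => 1 + y ^ 2) (2 * y) y := by
    simpa using ((hasDerivAt_pow 2 y).const_add 1)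
  have hsqrt : HasDerivAt (fun y : ℝ => Real.sqrt (1 + y ^ 2))
      (y / Real.sqrt (1 + y ^ 2)) y := by
    have := (Real.hasDerivAt_sqrt h1.ne').comp y hinner
    refine this.congr_deriv ?_
    field_simp
  have := (hasDerivAt_id y).div hsqrt hs.ne'
  refine this.congr_deriv ?_
  simp only [id]; field_simp
  nlinarith [hsq, hs]

lemma H_strictMono {a b : ℝ} (ha : 0 ≤ a) (hab : a < b) :
    a / Real.sqrt (1 + a ^ 2) < b / Real.sqrt (1 + b ^ 2) := by
  have h1 : (0:ℝ) < 1 + a ^ 2 := by positivity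
  have h2 : (0:ℝ) < 1 + b ^ 2 := by positivity
  have hsa : 0 < Real.sqrt (1 + a ^ 2) := Real.sqrt_pos.mpr h1
  have hsb : 0 < Real.sqrt (1 + b ^ 2) := Real.sqrt_pos.mpr h2
  have hsa2 := Real.sq_sqrt h1.le
  have hsb2 := Real.sq_sqrt h2.le
  rw [div_lt_div_iff₀ hsa hsb]
  nlinarith [mul_pos (ha.trans_lt hab) hsa, mul_nonneg ha hsb.le, hsa, hsb,
    mul_pos hsa hsb]


/-- Uniform lifespan lemma: if `E' + D ≤ C (1 + E²) E` on `[0,T]`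
with `E > 0` continuously differentiable, `D ≥ 0` continuous, `E(0) = Eᵢₙ > 0`,
and `T < (1/C) ln(√(1 + Eᵢₙ²)/Eᵢₙ)`, then with
`A(T) = (Eᵢₙ/√(1 + Eᵢₙ²)) e^{CT} < 1` and `B(T) = A(T)/√(1 − A(T)²)` one has
`E(t) ≤ B(T)` and `E(t) + ∫₀ᵗ D ≤ Eᵢₙ + C T B(T)(1 + B(T)²)` for all `t ∈ [0,T]`. -/
theorem uniform_lifespan_energy_bound (C T Ein : ℝ) (hC : 0 < C)
    (E E' D : ℝ → ℝ)
    (hE0 : E 0 = Ein) (hEin : 0 < Ein)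
    (hEpos : ∀ t ∈ Icc (0:ℝ) T, 0 < E t)
    (hEderiv : ∀ t ∈ Icc (0:ℝ) T, HasDerivAt E (E' t) t)
    (hE'cont : ContinuousOn E' (Icc (0:ℝ) T))
    (hDcont : ContinuousOn D (Icc (0:ℝ) T))
    (hDpos : ∀ t ∈ Icc (0:ℝ) T, 0 ≤ D t)
    (hineq : ∀ t ∈ Icc (0:ℝ) T, E' t + D t ≤ C * (1 + (E t) ^ 2) * E t)
    (hT : T < 1 / C * Real.log (Real.sqrt (1 + Ein ^ 2) / Ein))
    (A B : ℝ)
    (hA : A = Ein / Real.sqrt (1 + Ein ^ 2) * Real.exp (C * T))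
    (hB : B = A / Real.sqrt (1 - A ^ 2)) :
    A < 1 ∧
    ∀ t ∈ Icc (0:ℝ) T,
      E t ≤ B ∧
      E t + ∫ τ in (0:ℝ)..t, D τ ≤ Ein + C * T * B * (1 + B ^ 2) := by
  have h1E : (0:ℝ) < 1 + Ein ^ 2 := by positivity
  have hsE : 0 < Real.sqrt (1 + Ein ^ 2) := Real.sqrt_pos.mpr h1E
  have hApos : 0 < A := by rw [hA]; positivity
  have hA1 : A < 1 := by
    have hlt : C * T < Real.log (Real.sqrt (1 + Ein ^ 2) / Ein) := by
      rw [mul_comm]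
      calc T * C < (1 / C * Real.log (Real.sqrt (1 + Ein ^ 2) / Ein)) * C :=
        mul_lt_mul_of_pos_right hT hC
      _ = Real.log (Real.sqrt (1 + Ein ^ 2) / Ein) := by field_simp
    have hexp : Real.exp (C * T) < Real.sqrt (1 + Ein ^ 2) / Ein := by
      have := Real.exp_lt_exp.mpr hlt
      rwa [Real.exp_log (by positivity)] at this
    rw [hA]
    calc Ein / Real.sqrt (1 + Ein ^ 2) * Real.exp (C * T)
        < Ein / Real.sqrt (1 + Ein ^ 2) * (Real.sqrt (1 + Ein ^ 2) / Ein) := by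
          apply mul_lt_mul_of_pos_left hexp (by positivity)
      _ = 1 := by field_simp
  have h1A : 0 < 1 - A ^ 2 := by nlinarith
  have hsA : 0 < Real.sqrt (1 - A ^ 2) := Real.sqrt_pos.mpr h1A
  have hsA2 : Real.sqrt (1 - A ^ 2) ^ 2 = 1 - A ^ 2 := Real.sq_sqrt h1A.le
  have hBpos : 0 < B := by rw [hB]; positivity
  have hHB : B / Real.sqrt (1 + B ^ 2) = A := by
    have hB2 : 1 + B ^ 2 = (1 - A ^ 2)⁻¹ := by
      rw [hB]; field_simp; rw [hsA2]; ring
    rw [hB2, Real.sqrt_inv, hB]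
    field_simp
  refine ⟨hA1, fun t ht => ?_⟩
  obtain ⟨ht0, htT⟩ := ht
  have hT0 : 0 ≤ T := le_trans ht0 htT
  have hEcont : ContinuousOn E (Icc (0:ℝ) T) := fun x hx =>
    (hEderiv x hx).continuousAt.continuousWithinAt
  set G : ℝ → ℝ := fun s => E s / Real.sqrt (1 + E s ^ 2) * Real.exp (-C * s) with hG
  have hGderiv : ∀ x ∈ Icc (0:ℝ) T, HasDerivAt G
      ((1 / Real.sqrt (1 + E x ^ 2) ^ 3 * E' x) * Real.exp (-C * x)
        + (E x / Real.sqrt (1 + E x ^ 2)) * (-C * Real.exp (-C * x))) x := by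
    intro x hx
    have hHE : HasDerivAt (fun s => E s / Real.sqrt (1 + E s ^ 2))
        (1 / Real.sqrt (1 + E x ^ 2) ^ 3 * E' x) x :=
      (H_hasDerivAt (E x)).comp x (hEderiv x hx)
    have hexp : HasDerivAt (fun s => Real.exp (-C * s)) (-C * Real.exp (-C * x)) x := by
      have := ((hasDerivAt_id x).const_mul (-C)).exp
      simpa [mul_comm] using this
    exact hHE.mul hexp
  have hGanti : AntitoneOn G (Icc (0:ℝ) T) := by
    apply antitoneOn_of_deriv_nonpos (convex_Icc _ _)
    · apply ContinuousOn.mul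
      · apply hEcont.div
        · exact ((continuousOn_const.add (hEcont.pow 2)).sqrt)
        · intro x hx
          have : (0:ℝ) < 1 + E x ^ 2 := by positivity
          exact (Real.sqrt_pos.mpr this).ne'
      · exact (Real.continuous_exp.comp (continuous_const.mul continuous_id)).continuousOn
    · intro x hx
      rw [interior_Icc] at hx
      exact ((hGderiv x (Ioo_subset_Icc_self hx)).differentiableAt).differentiableWithinAt
    · intro x hx
      rw [interior_Icc] at hx
      have hx' := Ioo_subset_Icc_self hx
      rw [(hGderiv x hx').deriv]
      have hEx := hEpos x hx'
      have h1x : (0:ℝ) < 1 + E x ^ 2 := by positivity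
      have hsx : 0 < Real.sqrt (1 + E x ^ 2) := Real.sqrt_pos.mpr h1x
      have hsx2 : Real.sqrt (1 + E x ^ 2) ^ 2 = 1 + E x ^ 2 := Real.sq_sqrt h1x.le
      have hexppos : 0 < Real.exp (-C * x) := Real.exp_pos _
      have hE'le : E' x ≤ C * (1 + E x ^ 2) * E x :=
        le_trans (by linarith [hDpos x hx']) (hineq x hx')
      have hcube : Real.sqrt (1 + E x ^ 2) ^ 3 = (1 + E x ^ 2) * Real.sqrt (1 + E x ^ 2) := by
        rw [pow_succ, hsx2]
      have key : 1 / Real.sqrt (1 + E x ^ 2) ^ 3 * E' x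
          ≤ C * (E x / Real.sqrt (1 + E x ^ 2)) := by
        rw [div_mul_eq_mul_div, one_mul, div_le_iff₀ (by positivity), hcube]
        calc E' x ≤ C * (1 + E x ^ 2) * E x := hE'le
          _ = C * (E x / Real.sqrt (1 + E x ^ 2)) * ((1 + E x ^ 2) * Real.sqrt (1 + E x ^ 2)) := by
              field_simp
      nlinarith [mul_le_mul_of_nonneg_right key hexppos.le]
  have hG0 : G 0 = Ein / Real.sqrt (1 + Ein ^ 2) := by
    simp [hG, hE0]
  -- E s ≤ B for all s in [0,T]
  have hEB : ∀ s ∈ Icc (0:ℝ) T, E s ≤ B := by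
    intro s hs
    have hGle : G s ≤ G 0 := hGanti (left_mem_Icc.mpr hT0) hs hs.1
    rw [hG0] at hGle
    have hHEs : E s / Real.sqrt (1 + E s ^ 2) ≤ A := by
      have h2 : E s / Real.sqrt (1 + E s ^ 2)
          ≤ Ein / Real.sqrt (1 + Ein ^ 2) * Real.exp (C * s) := by
        calc E s / Real.sqrt (1 + E s ^ 2)
            = (E s / Real.sqrt (1 + E s ^ 2) * Real.exp (-C * s)) * Real.exp (C * s) := by
              rw [mul_assoc, ← Real.exp_add]; simp
          _ ≤ Ein / Real.sqrt (1 + Ein ^ 2) * Real.exp (C * s) :=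
              mul_le_mul_of_nonneg_right hGle (Real.exp_pos _).le
      calc E s / Real.sqrt (1 + E s ^ 2)
          ≤ Ein / Real.sqrt (1 + Ein ^ 2) * Real.exp (C * s) := h2
        _ ≤ Ein / Real.sqrt (1 + Ein ^ 2) * Real.exp (C * T) :=
            mul_le_mul_of_nonneg_left (Real.exp_le_exp.mpr
              (mul_le_mul_of_nonneg_left hs.2 hC.le)) (by positivity)
        _ = A := hA.symm
    by_contra h
    push_neg at h
    have := H_strictMono hBpos.le h
    rw [hHB] at this
    linarith
  refine ⟨hEB t ⟨ht0, htT⟩, ?_⟩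
  -- integral bound
  have hsub : Icc (0:ℝ) t ⊆ Icc (0:ℝ) T := Icc_subset_Icc le_rfl htT
  have huIcc : uIcc (0:ℝ) t = Icc (0:ℝ) t := uIcc_of_le ht0
  have hsub' : uIcc (0:ℝ) t ⊆ Icc (0:ℝ) T := by rw [huIcc]; exact hsub
  have hE'int : IntervalIntegrable E' MeasureTheory.volume 0 t :=
    (hE'cont.mono hsub').intervalIntegrable
  have hDint : IntervalIntegrable D MeasureTheory.volume 0 t :=
    (hDcont.mono hsub').intervalIntegrable
  have hFTC : ∫ τ in (0:ℝ)..t, E' τ = E t - Ein := by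
    rw [← hE0]
    exact intervalIntegral.integral_eq_sub_of_hasDerivAt
      (fun x hx => hEderiv x (hsub' hx)) hE'int
  have hmono : ∫ τ in (0:ℝ)..t, (E' τ + D τ) ≤ ∫ τ in (0:ℝ)..t, C * (1 + B ^ 2) * B := by
    apply intervalIntegral.integral_mono_on ht0 (hE'int.add hDint)
      intervalIntegrable_const
    intro x hx
    have hx' := hsub hx
    have hEx := hEpos x hx'
    have hExB := hEB x hx'
    have hq : (0:ℝ) ≤ B ^ 2 + B * E x + E x ^ 2 := by
      nlinarith [mul_nonneg hBpos.le hEx.le, sq_nonneg B, sq_nonneg (E x)]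
    have h5 : (1 + E x ^ 2) * E x ≤ (1 + B ^ 2) * B := by
      nlinarith [mul_nonneg (sub_nonneg.mpr hExB) hq]
    calc E' x + D x ≤ C * (1 + E x ^ 2) * E x := hineq x hx'
      _ ≤ C * (1 + B ^ 2) * B := by
          rw [mul_assoc, mul_assoc]
          exact mul_le_mul_of_nonneg_left h5 hC.le
  rw [intervalIntegral.integral_add hE'int hDint, hFTC,
    intervalIntegral.integral_const, smul_eq_mul, sub_zero] at hmono
  have h6 : (t - 0) * (C * (1 + B ^ 2) * B) ≤ T * (C * (1 + B ^ 2) * B) := by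
    apply mul_le_mul_of_nonneg_right (by linarith) (by positivity)
  have h7 : T * (C * (1 + B ^ 2) * B) = C * T * B * (1 + B ^ 2) := by ring
  linarith
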